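/- Let R ∈ ℝ^{q×s} have an SVD datum (σ, u, v) of rank r, and let k ≤ r. Let M ∈ ℝ^{n×s} satisfy the rank-k target restriction M = M · (Σ_{i<k} vᵢ vᵢᵀ), i.e. the rows of M lie in the span of v₀,…,v_{k−1}. Then the matrix X* := Σ_{i<k} σᵢ⁻¹ (M vᵢ) uᵢᵀ ∈ ℝ^{n×q} satisfies X* R = M, and for every X ∈ ℝ^{n×q} with X R = M one has ‖X*‖_F ≤ ‖X‖_F. (Rank-k truncated-pseudoinverse form of the minimal perturbation under the target restriction.) -/

import Mathlib

open Matrix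

/-- Frobenius norm of a real matrix. -/
noncomputable def frobNorm {n q : ℕ} (A : Matrix (Fin n) (Fin q) ℝ) : ℝ :=
  Real.sqrt (∑ i, ∑ j, (A i j) ^ 2)

lemma vmv_mul_vmv {n q s : ℕ} (a : Fin n → ℝ) (b c : Fin q → ℝ) (d : Fin s → ℝ) :
    vecMulVec a b * vecMulVec c d = (b ⬝ᵥ c) • vecMulVec a d := by
  ext p t
  simp only [mul_apply, vecMulVec_apply, Matrix.smul_apply, smul_eq_mul, dotProduct, Finset.sum_mul]
  apply Finset.sum_congr rfl
  intros; ring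

lemma mul_vmv {n q s : ℕ} (M : Matrix (Fin n) (Fin q) ℝ) (a : Fin q → ℝ) (b : Fin s → ℝ) :
    M * vecMulVec a b = vecMulVec (M.mulVec a) b := by
  ext p t
  simp only [mul_apply, vecMulVec_apply, mulVec, dotProduct, Finset.sum_mul]
  apply Finset.sum_congr rfl
  intros; ring

lemma vmv_mulVec {q s : ℕ} (a : Fin q → ℝ) (b c : Fin s → ℝ) :
    (vecMulVec a b).mulVec c = (b ⬝ᵥ c) • a := by
  ext p
  simp only [mulVec, vecMulVec_apply, dotProduct, Pi.smul_apply, smul_eq_mul, Finset.sum_mul]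
  apply Finset.sum_congr rfl
  intros; ring

lemma sum_mulVec' {q s r : ℕ} (A : Fin r → Matrix (Fin q) (Fin s) ℝ) (x : Fin s → ℝ) :
    (∑ i, A i).mulVec x = ∑ i, (A i).mulVec x := by
  ext p
  simp only [mulVec, dotProduct, Matrix.sum_apply, Finset.sum_apply, Finset.sum_mul]
  exact Finset.sum_comm

lemma sum_sq_proj {q r : ℕ} (S : Finset (Fin r)) (u : Fin r → Fin q → ℝ)
    (hu : ∀ i j, u i ⬝ᵥ u j = if i = j then (1 : ℝ) else 0) (c : Fin r → ℝ) :
    ∑ j, (∑ i ∈ S, c i * u i j) ^ 2 = ∑ i ∈ S, (c i) ^ 2 := by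
  have expand : ∀ j, (∑ i ∈ S, c i * u i j) ^ 2
      = ∑ i ∈ S, ∑ i' ∈ S, (c i * c i') * (u i j * u i' j) := by
    intro j
    rw [sq, Finset.sum_mul_sum]
    exact Finset.sum_congr rfl fun i _ => Finset.sum_congr rfl fun i' _ => by ring
  simp only [expand]
  rw [Finset.sum_comm]
  refine Finset.sum_congr rfl fun i hi => ?_
  rw [Finset.sum_comm]
  have h : ∀ i', ∑ j, (c i * c i') * (u i j * u i' j) = (c i * c i') * (u i ⬝ᵥ u i') := by
    intro i'; rw [dotProduct, Finset.mul_sum]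
  simp only [h, hu, mul_ite, mul_one, mul_zero]
  rw [Finset.sum_ite_eq S i (fun i' => c i * c i'), if_pos hi, sq]

lemma bessel {s r : ℕ} (S : Finset (Fin r)) (v : Fin r → Fin s → ℝ)
    (hv : ∀ i j, v i ⬝ᵥ v j = if i = j then (1 : ℝ) else 0)
    (x : Fin s → ℝ) :
    ∑ i ∈ S, (x ⬝ᵥ v i) ^ 2 ≤ ∑ j, (x j) ^ 2 := by
  have h2 := sum_sq_proj S v hv (fun i => x ⬝ᵥ v i)
  have h1 : ∑ j, x j * (∑ i ∈ S, (x ⬝ᵥ v i) * v i j) = ∑ i ∈ S, (x ⬝ᵥ v i) ^ 2 := by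
    simp only [Finset.mul_sum]
    rw [Finset.sum_comm]
    refine Finset.sum_congr rfl fun i _ => ?_
    have : ∀ j, x j * ((x ⬝ᵥ v i) * v i j) = (x ⬝ᵥ v i) * (x j * v i j) := fun j => by ring
    simp only [this, ← Finset.mul_sum]
    rw [show (∑ j, x j * v i j) = x ⬝ᵥ v i from rfl, sq]
  have key : (0:ℝ) ≤ ∑ j, (x j - ∑ i ∈ S, (x ⬝ᵥ v i) * v i j) ^ 2 :=
    Finset.sum_nonneg fun j _ => sq_nonneg _
  have expand : ∑ j, (x j - ∑ i ∈ S, (x ⬝ᵥ v i) * v i j) ^ 2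
      = ∑ j, (x j)^2 - 2 * (∑ j, x j * (∑ i ∈ S, (x ⬝ᵥ v i) * v i j))
        + ∑ j, (∑ i ∈ S, (x ⬝ᵥ v i) * v i j)^2 := by
    rw [show ∑ j, (x j - ∑ i ∈ S, (x ⬝ᵥ v i) * v i j) ^ 2
        = ∑ j, ((x j)^2 - 2 * (x j * ∑ i ∈ S, (x ⬝ᵥ v i) * v i j)
          + (∑ i ∈ S, (x ⬝ᵥ v i) * v i j)^2) from
      Finset.sum_congr rfl fun j _ => by ring]
    rw [Finset.sum_add_distrib, Finset.sum_sub_distrib, ← Finset.mul_sum]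
  rw [expand, h1, h2] at key
  linarith

theorem truncated_pseudoinverse_minimal {q s n r : ℕ}
    (R : Matrix (Fin q) (Fin s) ℝ)
    (σ : Fin r → ℝ) (hσ : ∀ i, 0 < σ i)
    (u : Fin r → Fin q → ℝ) (v : Fin r → Fin s → ℝ)
    (hu : ∀ i j, u i ⬝ᵥ u j = if i = j then (1 : ℝ) else 0)
    (hv : ∀ i j, v i ⬝ᵥ v j = if i = j then (1 : ℝ) else 0)
    (hR : R = ∑ i, σ i • vecMulVec (u i) (v i))
    (k : ℕ) (hk : k ≤ r)
    (M : Matrix (Fin n) (Fin s) ℝ)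
    (hM : M = M * ∑ i ∈ Finset.univ.filter (fun i : Fin r => (i : ℕ) < k),
        vecMulVec (v i) (v i)) :
    (∑ i ∈ Finset.univ.filter (fun i : Fin r => (i : ℕ) < k),
        (σ i)⁻¹ • vecMulVec (M.mulVec (v i)) (u i)) * R = M ∧
      ∀ X : Matrix (Fin n) (Fin q) ℝ, X * R = M →
        frobNorm (∑ i ∈ Finset.univ.filter (fun i : Fin r => (i : ℕ) < k),
          (σ i)⁻¹ • vecMulVec (M.mulVec (v i)) (u i)) ≤ frobNorm X := by
  set S := Finset.univ.filter (fun i : Fin r => (i : ℕ) < k) with hS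
  have part1 : (∑ i ∈ S, (σ i)⁻¹ • vecMulVec (M.mulVec (v i)) (u i)) * R = M := by
    rw [hR, Matrix.sum_mul]
    have : ∀ i ∈ S, ((σ i)⁻¹ • vecMulVec (M.mulVec (v i)) (u i)) *
        (∑ j, σ j • vecMulVec (u j) (v j)) = vecMulVec (M.mulVec (v i)) (v i) := by
      intro i _
      rw [Matrix.mul_sum]
      have step : ∀ j, ((σ i)⁻¹ • vecMulVec (M.mulVec (v i)) (u i)) * (σ j • vecMulVec (u j) (v j))
          = ((σ i)⁻¹ * σ j * (u i ⬝ᵥ u j)) • vecMulVec (M.mulVec (v i)) (v j) := by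
        intro j
        rw [Matrix.smul_mul, Matrix.mul_smul, vmv_mul_vmv, smul_smul, smul_smul]
      simp only [step, hu, mul_ite, mul_one, mul_zero, ite_smul, zero_smul]
      rw [Finset.sum_ite_eq Finset.univ i
        (fun j => ((σ i)⁻¹ * σ j) • vecMulVec (M.mulVec (v i)) (v j))]
      simp [inv_mul_cancel₀ (hσ i).ne']
    rw [Finset.sum_congr rfl this]
    have : ∑ i ∈ S, vecMulVec (M.mulVec (v i)) (v i) = M * ∑ i ∈ S, vecMulVec (v i) (v i) := by
      rw [Matrix.mul_sum]
      exact Finset.sum_congr rfl fun i _ => (mul_vmv M (v i) (v i)).symm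
    rw [this, ← hM]
  refine ⟨part1, ?_⟩
  intro X hXR
  have hXu : ∀ i, (σ i)⁻¹ • M.mulVec (v i) = X.mulVec (u i) := by
    intro i
    have hRv : R.mulVec (v i) = σ i • u i := by
      rw [hR]
      have : ∀ j, (σ j • vecMulVec (u j) (v j)).mulVec (v i)
          = (σ j * (v j ⬝ᵥ v i)) • u j := by
        intro j
        rw [Matrix.smul_mulVec, vmv_mulVec, smul_smul]
      rw [sum_mulVec']
      simp only [this, hv, mul_ite, mul_one, mul_zero, ite_smul, zero_smul]
      rw [Finset.sum_ite_eq' Finset.univ i (fun j => σ j • u j)]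
      simp
    have h := congrArg (fun A => A.mulVec (v i)) hXR
    rw [← Matrix.mulVec_mulVec, hRv, Matrix.mulVec_smul] at h
    rw [← h, smul_smul, inv_mul_cancel₀ (hσ i).ne', one_smul]
  have hrow : ∀ p j, (∑ i ∈ S, (σ i)⁻¹ • vecMulVec (M.mulVec (v i)) (u i)) p j
      = ∑ i ∈ S, ((fun m => X p m) ⬝ᵥ u i) * u i j := by
    intro p j
    rw [Matrix.sum_apply]
    refine Finset.sum_congr rfl fun i _ => ?_
    have := congrFun (hXu i) p
    simp only [Pi.smul_apply, smul_eq_mul, mulVec, dotProduct] at this ⊢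
    simp only [Matrix.smul_apply, vecMulVec_apply, smul_eq_mul]
    rw [← this]
    simp only [mulVec, dotProduct]
    ring
  unfold frobNorm
  apply Real.sqrt_le_sqrt
  apply Finset.sum_le_sum
  intro p _
  rw [show (∑ j, ((∑ i ∈ S, (σ i)⁻¹ • vecMulVec (M.mulVec (v i)) (u i)) p j)^2)
      = ∑ j, (∑ i ∈ S, ((fun m => X p m) ⬝ᵥ u i) * u i j)^2 from by
    exact Finset.sum_congr rfl fun j _ => by rw [hrow p j]]
  rw [sum_sq_proj S u hu]
  exact bessel S u hu (fun m => X p m)
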